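/- Let γ : I → ℝ be twice continuously differentiable with 1+γ(θ) > 0 on I, and let ℘_γ ∈ C(I) be defined by the identity 𝔽(γ, ℘_γ) = 0. Then for every twice continuously differentiable h : I → ℝ and every θ ∈ I the limit lim_{t→0} (𝔽(γ + t·h, ℘_γ)(θ) − 𝔽(γ, ℘_γ)(θ))/t exists and equals τ₁(θ)·h''(θ) + τ₂(θ)·h'(θ) + τ₃(θ)·h(θ), where τ₁(θ) = (σ/(R·P_atm))·(1+γ(θ))/((1+γ(θ))² + γ'(θ)²)^{3/2} (which is everywhere positive) and τ₂, τ₃ : I → ℝ are continuous functions determined by γ, ρ, F and the constants, independent of h. -/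

import Mathlib

/-- The equatorial strip `I = [π/2 − ε, π/2 + ε]` with `ε = 0.016`. -/
noncomputable def Istrip : Set ℝ :=
  Set.Icc (Real.pi / 2 - 0.016) (Real.pi / 2 + 0.016)

/-- The characteristic curve `s ↦ θ̄(s)`. -/
noncomputable def thetaBar (s : ℝ) : ℝ :=
  Real.arccos ((1 - Real.exp (2 * s)) / (1 + Real.exp (2 * s)))

/-- The function `f(θ) = ½·ln((1−cos θ)/(1+cos θ))`. -/
noncomputable def fChar (θ : ℝ) : ℝ :=
  (1 / 2) * Real.log ((1 - Real.cos θ) / (1 + Real.cos θ))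

/-- `𝓕(ξ,θ) = ∫₀^{f(θ)} g·ρ_θ(ξ·(e^s+e^{−s})/2, θ̄(s)) ds`. -/
noncomputable def calF (g : ℝ) (ρθ : ℝ → ℝ → ℝ) (ξ θ : ℝ) : ℝ :=
  ∫ s in (0:ℝ)..(fChar θ),
    g * ρθ (ξ * (Real.exp s + Real.exp (-s)) / 2) (thetaBar s)

/-- The nondimensionalized Bernoulli functional `𝔽(h,℘)(θ)`. -/
noncomputable def FF (g R σ Patm a b : ℝ) (ρ ρθ : ℝ → ℝ → ℝ) (F : ℝ → ℝ)
    (h ℘ : ℝ → ℝ) (θ : ℝ) : ℝ :=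
  -℘ θ - (g / Patm) * (∫ s in a..(R * (1 + h θ)), ρ s θ)
    + (1 / Patm) *
        (∫ s in (a * Real.sin θ)..(R * (1 + h θ) * Real.sin θ),
          (F s / s + calF g ρθ s θ))
    - (σ / (R * Patm)) *
        ((2 * (1 + h θ)^2 + 3 * (deriv h θ)^2) /
            (((1 + h θ)^2 + (deriv h θ)^2) ^ ((3:ℝ)/2))
          - deriv (deriv h) θ * (1 + h θ) /
            (((1 + h θ)^2 + (deriv h θ)^2) ^ ((3:ℝ)/2))
          - Real.cot θ * deriv h θ /
            ((1 + h θ) * (((1 + h θ)^2 + (deriv h θ)^2) ^ ((1:ℝ)/2))))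
    + (b / Patm + (1 / Patm) *
        ∫ s in (Real.pi / 2)..θ,
          (F (a * Real.sin s) * Real.cot s
            + calF g ρθ (a * Real.sin s) s * a * Real.cos s))

/-! ### Auxiliary material -/

noncomputable def GDBKww (u v : ℝ) : ℝ := -(1+u) / (((1+u)^2+v^2) ^ ((3:ℝ)/2))

noncomputable def GDBKuu (c u v w : ℝ) : ℝ :=
  4*(1+u)/(((1+u)^2+v^2) ^ ((3:ℝ)/2))
  - 3*(1+u)*(2*(1+u)^2+3*v^2)/(((1+u)^2+v^2) ^ ((5:ℝ)/2))
  - w/(((1+u)^2+v^2) ^ ((3:ℝ)/2)) + 3*w*(1+u)^2/(((1+u)^2+v^2) ^ ((5:ℝ)/2))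
  + c*v/((1+u)^2*(((1+u)^2+v^2) ^ ((1:ℝ)/2))) + c*v/(((1+u)^2+v^2) ^ ((3:ℝ)/2))

noncomputable def GDBKvv (c u v w : ℝ) : ℝ :=
  6*v/(((1+u)^2+v^2) ^ ((3:ℝ)/2))
  - 3*v*(2*(1+u)^2+3*v^2)/(((1+u)^2+v^2) ^ ((5:ℝ)/2))
  + 3*w*(1+u)*v/(((1+u)^2+v^2) ^ ((5:ℝ)/2))
  - c/((1+u)*(((1+u)^2+v^2) ^ ((1:ℝ)/2)))
  + c*v^2/((1+u)*(((1+u)^2+v^2) ^ ((3:ℝ)/2)))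

set_option maxHeartbeats 1600000 in
lemma GDB_hasDerivAt_Kterm (c u v w bu bv bw : ℝ) (hu : 0 < 1 + u) :
    HasDerivAt (fun t : ℝ =>
      (2*(1+(u+t*bu))^2 + 3*(v+t*bv)^2) / (((1+(u+t*bu))^2+(v+t*bv)^2) ^ ((3:ℝ)/2))
      - (w+t*bw)*(1+(u+t*bu)) / (((1+(u+t*bu))^2+(v+t*bv)^2) ^ ((3:ℝ)/2))
      - c*(v+t*bv) / ((1+(u+t*bu)) * (((1+(u+t*bu))^2+(v+t*bv)^2) ^ ((1:ℝ)/2))))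
    (GDBKuu c u v w * bu + GDBKvv c u v w * bv + GDBKww u v * bw) 0 := by
  have hD : (0:ℝ) < (1+u)^2 + v^2 := by positivity
  have hU : HasDerivAt (fun t : ℝ => 1 + (u + t * bu)) bu 0 := by
    simpa using (((hasDerivAt_id (0:ℝ)).mul_const bu).const_add u).const_add 1
  have hV : HasDerivAt (fun t : ℝ => v + t * bv) bv 0 := by
    simpa using ((hasDerivAt_id (0:ℝ)).mul_const bv).const_add v
  have hW : HasDerivAt (fun t : ℝ => w + t * bw) bw 0 := by
    simpa using ((hasDerivAt_id (0:ℝ)).mul_const bw).const_add w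
  have hDt : HasDerivAt (fun t : ℝ => (1+(u+t*bu))^2+(v+t*bv)^2)
      (2*(1+u)^1*bu + 2*(v)^1*bv) 0 := by
    have := (hU.pow 2).add (hV.pow 2)
    exact HasDerivAt.congr_deriv this (by simp)
  have hne : ((fun t : ℝ => (1+(u+t*bu))^2+(v+t*bv)^2) 0) ≠ 0 := by
    simpa using hD.ne'
  have h32 : HasDerivAt (fun t : ℝ => (((1+(u+t*bu))^2+(v+t*bv)^2) ^ ((3:ℝ)/2)))
      ((2*(1+u)^1*bu + 2*(v)^1*bv) * ((3:ℝ)/2) * (((1+u)^2+v^2) ^ ((3:ℝ)/2 - 1))) 0 := by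
    simpa using hDt.rpow_const (p := (3:ℝ)/2) (Or.inl hne)
  have h12 : HasDerivAt (fun t : ℝ => (((1+(u+t*bu))^2+(v+t*bv)^2) ^ ((1:ℝ)/2)))
      ((2*(1+u)^1*bu + 2*(v)^1*bv) * ((1:ℝ)/2) * (((1+u)^2+v^2) ^ ((1:ℝ)/2 - 1))) 0 := by
    simpa using hDt.rpow_const (p := (1:ℝ)/2) (Or.inl hne)
  have hnum1 : HasDerivAt (fun t : ℝ => 2*(1+(u+t*bu))^2 + 3*(v+t*bv)^2)
      (2*(2*(1+u)^1*bu) + 3*(2*(v)^1*bv)) 0 := by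
    have := ((hU.pow 2).const_mul 2).add ((hV.pow 2).const_mul 3)
    exact HasDerivAt.congr_deriv this (by simp)
  have h32ne : (((1+u)^2+v^2) ^ ((3:ℝ)/2)) ≠ 0 := by positivity
  have h12ne : (((1+u)^2+v^2) ^ ((1:ℝ)/2)) ≠ 0 := by positivity
  have hT1 := hnum1.div h32 (by simpa using h32ne)
  have hT2 := (hW.mul hU).div h32 (by simpa using h32ne)
  have hT3 := (hV.const_mul c).div (hU.mul h12)
      (by simpa using mul_ne_zero hu.ne' h12ne)
  have H := (hT1.sub hT2).sub hT3
  simp only [zero_mul, add_zero, mul_zero, zero_add, Pi.mul_apply] at H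
  refine H.congr_deriv ?_
  have e1 : ((3:ℝ)/2 - 1) = (1:ℝ)/2 := by norm_num
  have e2 : ((1:ℝ)/2 - 1) = -((1:ℝ)/2) := by norm_num
  rw [e1, e2, Real.rpow_neg hD.le]
  set D := (1+u)^2 + v^2 with hDdef
  set q := D ^ ((1:ℝ)/2) with hqdef
  have hq : 0 < q := Real.rpow_pos_of_pos hD _
  have hq2 : q^2 = D := by
    rw [hqdef, ← Real.rpow_natCast (D ^ ((1:ℝ)/2)) 2, ← Real.rpow_mul hD.le]
    norm_num
  have h32q : D ^ ((3:ℝ)/2) = q^3 := by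
    rw [hqdef, ← Real.rpow_natCast (D ^ ((1:ℝ)/2)) 3, ← Real.rpow_mul hD.le]
    norm_num
  have h52q : D ^ ((5:ℝ)/2) = q^5 := by
    rw [hqdef, ← Real.rpow_natCast (D ^ ((1:ℝ)/2)) 5, ← Real.rpow_mul hD.le]
    norm_num
  simp only [GDBKuu, GDBKvv, GDBKww, ← hDdef, h32q, h52q, ← hqdef]
  have hune : (1+u) ≠ 0 := hu.ne'
  field_simp
  ring

lemma GDB_Istrip_subset : Istrip ⊆ Set.Ioo 0 Real.pi := by
  intro θ hθ
  obtain ⟨h1, h2⟩ := hθ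
  have hpi := Real.pi_gt_three
  constructor <;> nlinarith

lemma GDB_thetaBar_mem (s : ℝ) : thetaBar s ∈ Set.Ioo 0 Real.pi := by
  have he : (0:ℝ) < Real.exp (2*s) := Real.exp_pos _
  have h1 : (1 - Real.exp (2*s)) / (1 + Real.exp (2*s)) < 1 := by
    rw [div_lt_one (by linarith)]; linarith
  refine ⟨Real.arccos_pos.mpr h1, ?_⟩
  refine lt_of_le_of_ne (Real.arccos_le_pi _) (fun h => ?_)
  have h2 := Real.arccos_eq_pi.mp h
  have h3 : (-1:ℝ) < (1 - Real.exp (2*s)) / (1 + Real.exp (2*s)) := by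
    rw [neg_lt, ← neg_div, neg_sub, div_lt_one (by linarith)]; linarith
  linarith

lemma GDB_cos_mem (θ : ℝ) (hθ : θ ∈ Set.Ioo 0 Real.pi) :
    Real.cos θ ∈ Set.Ioo (-1:ℝ) 1 := by
  have hpi := Real.pi_pos
  constructor
  · have := Real.strictAntiOn_cos ⟨hθ.1.le, hθ.2.le⟩ ⟨hpi.le, le_refl _⟩ hθ.2
    simpa [Real.cos_pi] using this
  · have := Real.strictAntiOn_cos ⟨le_refl _, hpi.le⟩ ⟨hθ.1.le, hθ.2.le⟩ hθ.1
    simpa [Real.cos_zero] using this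

lemma GDB_continuousOn_fChar : ContinuousOn fChar (Set.Ioo 0 Real.pi) := by
  apply ContinuousOn.mul continuousOn_const
  apply ContinuousOn.log
  · exact (continuousOn_const.sub (Real.continuous_cos.continuousOn)).div
      (continuousOn_const.add (Real.continuous_cos.continuousOn))
      (fun θ hθ => by have := (GDB_cos_mem θ hθ).1; linarith)
  · intro θ hθ
    have h1 := (GDB_cos_mem θ hθ).1
    have h2 := (GDB_cos_mem θ hθ).2
    exact (div_pos (by linarith) (by linarith)).ne'

lemma GDB_rhoTheta_cont (ρ ρθ : ℝ → ℝ → ℝ)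
    (hρ : ContDiffOn ℝ 2 (fun q : ℝ × ℝ => ρ q.1 q.2) (Set.Ioi 0 ×ˢ Set.Ioo 0 Real.pi))
    (hρθ : ∀ r ∈ Set.Ioi (0:ℝ), ∀ t ∈ Set.Ioo 0 Real.pi,
      HasDerivAt (fun u => ρ r u) (ρθ r t) t) :
    ContinuousOn (fun q : ℝ × ℝ => ρθ q.1 q.2) (Set.Ioi 0 ×ˢ Set.Ioo 0 Real.pi) := by
  have hopen : IsOpen (Set.Ioi (0:ℝ) ×ˢ Set.Ioo 0 Real.pi) :=
    isOpen_Ioi.prod isOpen_Ioo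
  have hfd : ContinuousOn (fderiv ℝ (fun q : ℝ × ℝ => ρ q.1 q.2))
      (Set.Ioi 0 ×ˢ Set.Ioo 0 Real.pi) :=
    hρ.continuousOn_fderiv_of_isOpen hopen (by norm_num)
  have key : ∀ q ∈ (Set.Ioi (0:ℝ) ×ˢ Set.Ioo 0 Real.pi),
      ρθ q.1 q.2 = (fderiv ℝ (fun q : ℝ × ℝ => ρ q.1 q.2) q) (0, 1) := by
    rintro ⟨r, t⟩ ⟨hr, ht⟩
    have hdiff : DifferentiableAt ℝ (fun q : ℝ × ℝ => ρ q.1 q.2) (r, t) :=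
      (hρ.contDiffAt (hopen.mem_nhds ⟨hr, ht⟩)).differentiableAt (by norm_num)
    have hcurve : HasDerivAt (fun u : ℝ => ((r, u) : ℝ × ℝ)) ((0:ℝ), (1:ℝ)) t :=
      HasDerivAt.prodMk (hasDerivAt_const t r) (hasDerivAt_id t)
    have hcomp : HasDerivAt (fun u => ρ r u)
        ((fderiv ℝ (fun q : ℝ × ℝ => ρ q.1 q.2) (r, t)) (0, 1)) t :=
      (hdiff.hasFDerivAt.comp_hasDerivAt t hcurve)
    exact (hρθ r hr t ht).unique hcomp
  refine ContinuousOn.congr ?_ key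
  exact (ContinuousLinearMap.apply ℝ ℝ ((0:ℝ), (1:ℝ))).continuous.comp_continuousOn hfd

lemma GDB_calF_contOn (g : ℝ) (ρθ : ℝ → ℝ → ℝ)
    (hc : ContinuousOn (fun q : ℝ × ℝ => ρθ q.1 q.2) (Set.Ioi 0 ×ˢ Set.Ioo 0 Real.pi)) :
    ContinuousOn (fun q : ℝ × ℝ => calF g ρθ q.1 q.2)
      (Set.Ioi 0 ×ˢ Set.Ioo 0 Real.pi) := by
  rintro ⟨ξ₀, θ₀⟩ ⟨hξ₀, hθ₀⟩
  simp only [Set.mem_Ioi] at hξ₀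
  simp only [Set.mem_prod, Set.mem_Ioo] at hθ₀
  have hpi := Real.pi_pos
  set c : ℝ := ξ₀ / 2 with hc_def
  set lo : ℝ := θ₀ / 2 with hlo_def
  set hi : ℝ := (θ₀ + Real.pi) / 2 with hhi_def
  have hcpos : 0 < c := by positivity
  have hlopos : 0 < lo := by simp only [hlo_def]; linarith [hθ₀.1]
  have hlohi : lo ≤ hi := by simp only [hlo_def, hhi_def]; linarith [hθ₀.2]
  have hhipi : hi < Real.pi := by simp only [hhi_def]; linarith [hθ₀.2]
  set k : (ℝ × ℝ) → ℝ → ℝ := fun q s =>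
    g * ρθ (max q.1 c * (Real.exp s + Real.exp (-s)) / 2) (thetaBar s) with hk_def
  have hinner : Continuous (fun p : (ℝ × ℝ) × ℝ =>
      ((max p.1.1 c * (Real.exp p.2 + Real.exp (-p.2)) / 2, thetaBar p.2) : ℝ × ℝ)) := by
    apply Continuous.prodMk
    · fun_prop
    · apply Real.continuous_arccos.comp
      apply Continuous.div
      · fun_prop
      · fun_prop
      · intro x; positivity
  have hkcont : Continuous (Function.uncurry k) := by
    have : Continuous (fun p : (ℝ × ℝ) × ℝ =>
        ρθ (max p.1.1 c * (Real.exp p.2 + Real.exp (-p.2)) / 2) (thetaBar p.2)) := by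
      refine hc.comp_continuous hinner ?_
      intro p
      constructor
      · have h1 : c ≤ max p.1.1 c := le_max_right _ _
        have h2 : 0 < Real.exp p.2 + Real.exp (-p.2) := by positivity
        simp only [Set.mem_Ioi]
        positivity
      · exact GDB_thetaBar_mem _
    exact continuous_const.mul this
  have hend : Continuous (fun q : ℝ × ℝ => fChar (min (max q.2 lo) hi)) := by
    refine GDB_continuousOn_fChar.comp_continuous (by fun_prop) ?_
    intro q
    constructor
    · exact lt_of_lt_of_le hlopos (le_min (le_max_right _ _) hlohi)
    · exact lt_of_le_of_lt (min_le_right _ _) hhipi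
  have hFext : Continuous (fun q : ℝ × ℝ =>
      ∫ s in (0:ℝ)..(fChar (min (max q.2 lo) hi)), k q s) :=
    intervalIntegral.continuous_parametric_intervalIntegral_of_continuous hkcont hend
  have heq : (fun q : ℝ × ℝ => calF g ρθ q.1 q.2) =ᶠ[nhds (ξ₀, θ₀)]
      (fun q : ℝ × ℝ => ∫ s in (0:ℝ)..(fChar (min (max q.2 lo) hi)), k q s) := by
    have hopen : IsOpen {q : ℝ × ℝ | c < q.1 ∧ lo < q.2 ∧ q.2 < hi} := by
      have : {q : ℝ × ℝ | c < q.1 ∧ lo < q.2 ∧ q.2 < hi} =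
          (Set.Ioi c) ×ˢ (Set.Ioo lo hi) := by
        ext q; simp [Set.mem_prod, and_assoc]
      rw [this]; exact isOpen_Ioi.prod isOpen_Ioo
    have hmem : (ξ₀, θ₀) ∈ {q : ℝ × ℝ | c < q.1 ∧ lo < q.2 ∧ q.2 < hi} := by
      refine ⟨?_, ?_, ?_⟩
      · simp only [hc_def]; linarith
      · simp only [hlo_def]; linarith [hθ₀.1]
      · simp only [hhi_def]; linarith [hθ₀.2]
    filter_upwards [hopen.mem_nhds hmem] with q hq
    obtain ⟨hq1, hq2, hq3⟩ := hq
    have e2 : min (max q.2 lo) hi = q.2 := by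
      rw [max_eq_left hq2.le, min_eq_left hq3.le]
    rw [e2]
    simp only [hk_def, calF, max_eq_left hq1.le]
  exact (hFext.continuousAt.congr heq.symm).continuousWithinAt

attribute [irreducible] calF


set_option maxHeartbeats 1600000 in
/-- The Gateaux derivative of the Bernoulli functional `𝔽` in its first argument
at `(γ, ℘_γ)` is the second-order differential operator
`h ↦ τ₁·h'' + τ₂·h' + τ₃·h`, where
`τ₁ = (σ/(R·P_atm))·(1+γ)/((1+γ)² + γ'²)^{3/2} > 0` and `τ₂, τ₃` are continuous
on `I` and independent of `h`. -/
theorem gateaux_derivative_of_bernoulli_functional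
    (g R σ Patm a b : ℝ)
    (hg : 0 < g) (hR : 0 < R) (hσ : 0 < σ) (hP : 0 < Patm) (ha : 0 < a)
    (ρ ρθ : ℝ → ℝ → ℝ)
    (hρ : ContDiffOn ℝ 2 (fun q : ℝ × ℝ => ρ q.1 q.2)
      (Set.Ioi 0 ×ˢ Set.Ioo 0 Real.pi))
    (hρθ : ∀ r ∈ Set.Ioi (0:ℝ), ∀ t ∈ Set.Ioo 0 Real.pi,
      HasDerivAt (fun u => ρ r u) (ρθ r t) t)
    (F : ℝ → ℝ) (hF : ContDiffOn ℝ 1 F (Set.Ioi 0))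
    (γ : ℝ → ℝ) (hγ : ContDiff ℝ 2 γ)
    (hγpos : ∀ θ ∈ Istrip, 0 < 1 + γ θ)
    (℘γ : ℝ → ℝ) (h℘cont : ContinuousOn ℘γ Istrip)
    (h℘ : ∀ θ ∈ Istrip, FF g R σ Patm a b ρ ρθ F γ ℘γ θ = 0) :
    ∃ τ₂ τ₃ : ℝ → ℝ, ContinuousOn τ₂ Istrip ∧ ContinuousOn τ₃ Istrip ∧
      (∀ θ ∈ Istrip,
        0 < σ / (R * Patm) * (1 + γ θ) /
          (((1 + γ θ)^2 + (deriv γ θ)^2) ^ ((3:ℝ)/2))) ∧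
      (∀ h : ℝ → ℝ, ContDiff ℝ 2 h → ∀ θ ∈ Istrip,
        Filter.Tendsto
          (fun t : ℝ =>
            (FF g R σ Patm a b ρ ρθ F (fun x => γ x + t * h x) ℘γ θ
              - FF g R σ Patm a b ρ ρθ F γ ℘γ θ) / t)
          (nhdsWithin (0:ℝ) {(0:ℝ)}ᶜ)
          (nhds (σ / (R * Patm) * (1 + γ θ) /
              (((1 + γ θ)^2 + (deriv γ θ)^2) ^ ((3:ℝ)/2)) * deriv (deriv h) θ
            + τ₂ θ * deriv h θ + τ₃ θ * h θ))) := by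
  have hRP : (0:ℝ) < R * Patm := mul_pos hR hP
  have hρθc := GDB_rhoTheta_cont ρ ρθ hρ hρθ
  have hcalFc := GDB_calF_contOn g ρθ hρθc
  have h2 : (2 : WithTop ℕ∞) = 1 + 1 := by norm_num
  have hγ1 : ContDiff ℝ 1 (deriv γ) := (contDiff_succ_iff_deriv.mp (h2 ▸ hγ)).2.2
  have hγd : Differentiable ℝ γ := hγ.differentiable (by norm_num)
  have hγ'd : Differentiable ℝ (deriv γ) := hγ1.differentiable (by norm_num)
  have hγ'c : Continuous (deriv γ) := hγ1.continuous
  have hγ''c : Continuous (deriv (deriv γ)) := (contDiff_one_iff_deriv.mp hγ1).2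
  have hDpos : ∀ θ ∈ Istrip, (0:ℝ) < (1 + γ θ)^2 + (deriv γ θ)^2 := fun θ hθ =>
    add_pos_of_pos_of_nonneg (pow_pos (hγpos θ hθ) 2) (sq_nonneg _)
  have hsin : ∀ θ ∈ Istrip, 0 < Real.sin θ := fun θ hθ =>
    Real.sin_pos_of_pos_of_lt_pi (GDB_Istrip_subset hθ).1 (GDB_Istrip_subset hθ).2
  have hmpos : ∀ θ ∈ Istrip, 0 < R*(1+γ θ)*Real.sin θ := fun θ hθ =>
    mul_pos (mul_pos hR (hγpos θ hθ)) (hsin θ hθ)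
  -- continuity building blocks
  have hUc : ContinuousOn (fun θ => 1 + γ θ) Istrip :=
    (continuous_const.add hγ.continuous).continuousOn
  have hVc : ContinuousOn (deriv γ) Istrip := hγ'c.continuousOn
  have hWc : ContinuousOn (deriv (deriv γ)) Istrip := hγ''c.continuousOn
  have hDc : ContinuousOn (fun θ => (1 + γ θ)^2 + (deriv γ θ)^2) Istrip :=
    (hUc.pow 2).add (hVc.pow 2)
  have hD12c : ContinuousOn (fun θ => ((1 + γ θ)^2 + (deriv γ θ)^2) ^ ((1:ℝ)/2)) Istrip :=
    hDc.rpow_const (fun θ _ => Or.inr (by norm_num))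
  have hD32c : ContinuousOn (fun θ => ((1 + γ θ)^2 + (deriv γ θ)^2) ^ ((3:ℝ)/2)) Istrip :=
    hDc.rpow_const (fun θ _ => Or.inr (by norm_num))
  have hD52c : ContinuousOn (fun θ => ((1 + γ θ)^2 + (deriv γ θ)^2) ^ ((5:ℝ)/2)) Istrip :=
    hDc.rpow_const (fun θ _ => Or.inr (by norm_num))
  have hD12ne : ∀ θ ∈ Istrip, ((1 + γ θ)^2 + (deriv γ θ)^2) ^ ((1:ℝ)/2) ≠ 0 :=
    fun θ hθ => (Real.rpow_pos_of_pos (hDpos θ hθ) _).ne'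
  have hD32ne : ∀ θ ∈ Istrip, ((1 + γ θ)^2 + (deriv γ θ)^2) ^ ((3:ℝ)/2) ≠ 0 :=
    fun θ hθ => (Real.rpow_pos_of_pos (hDpos θ hθ) _).ne'
  have hD52ne : ∀ θ ∈ Istrip, ((1 + γ θ)^2 + (deriv γ θ)^2) ^ ((5:ℝ)/2) ≠ 0 :=
    fun θ hθ => (Real.rpow_pos_of_pos (hDpos θ hθ) _).ne'
  have hUne : ∀ θ ∈ Istrip, (1 + γ θ) ≠ 0 := fun θ hθ => (hγpos θ hθ).ne'
  have hcotc : ContinuousOn Real.cot Istrip :=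
    ContinuousOn.congr (Real.continuous_cos.continuousOn.div
      Real.continuous_sin.continuousOn (fun θ hθ => (hsin θ hθ).ne'))
      (fun θ _ => Real.cot_eq_cos_div_sin θ)
  have hρcontθ : ContinuousOn (fun θ => ρ (R*(1+γ θ)) θ) Istrip :=
    hρ.continuousOn.comp
      ((continuous_const.mul (continuous_const.add hγ.continuous)).prodMk
        continuous_id).continuousOn
      (fun θ hθ => ⟨mul_pos hR (hγpos θ hθ), GDB_Istrip_subset hθ⟩)
  have hminner : ContinuousOn (fun θ => R*(1+γ θ)*Real.sin θ) Istrip :=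
    ((continuous_const.mul (continuous_const.add hγ.continuous)).mul
      Real.continuous_sin).continuousOn
  have hFm : ContinuousOn (fun θ => F (R*(1+γ θ)*Real.sin θ)) Istrip :=
    hF.continuousOn.comp hminner (fun θ hθ => hmpos θ hθ)
  have hcalFm : ContinuousOn (fun θ => calF g ρθ (R*(1+γ θ)*Real.sin θ) θ) Istrip :=
    hcalFc.comp (hminner.prodMk (continuous_id.continuousOn))
      (fun θ hθ => ⟨hmpos θ hθ, GDB_Istrip_subset hθ⟩)
  refine ⟨fun θ => -(σ/(R*Patm)) * GDBKvv (Real.cot θ) (γ θ) (deriv γ θ) (deriv (deriv γ) θ),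
    fun θ => -(g/Patm) * (ρ (R*(1+γ θ)) θ * R)
      + (1/Patm) * ((F (R*(1+γ θ)*Real.sin θ) / (R*(1+γ θ)*Real.sin θ)
          + calF g ρθ (R*(1+γ θ)*Real.sin θ) θ) * (R*Real.sin θ))
      - (σ/(R*Patm)) * GDBKuu (Real.cot θ) (γ θ) (deriv γ θ) (deriv (deriv γ) θ),
    ?_, ?_, ?_, ?_⟩
  · -- τ₂ continuity
    apply continuousOn_const.mul
    simp only [GDBKvv]
    refine ContinuousOn.add (ContinuousOn.sub (ContinuousOn.add (ContinuousOn.sub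
      ?_ ?_) ?_) ?_) ?_
    · exact ContinuousOn.div (continuous_const.mul hγ'c).continuousOn hD32c hD32ne
    · exact ContinuousOn.div (((continuous_const.mul hγ'c).continuousOn).mul
        ((continuousOn_const.mul (hUc.pow 2)).add
          (continuousOn_const.mul (hVc.pow 2)))) hD52c hD52ne
    · exact ContinuousOn.div (((continuousOn_const.mul hWc).mul hUc).mul hVc) hD52c hD52ne
    · exact hcotc.div (hUc.mul hD12c)
        (fun θ hθ => mul_ne_zero (hUne θ hθ) (hD12ne θ hθ))
    · exact (hcotc.mul (hVc.pow 2)).div (hUc.mul hD32c)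
        (fun θ hθ => mul_ne_zero (hUne θ hθ) (hD32ne θ hθ))
  · -- τ₃ continuity
    refine ContinuousOn.sub (ContinuousOn.add ?_ ?_) ?_
    · exact continuousOn_const.mul (hρcontθ.mul continuousOn_const)
    · refine continuousOn_const.mul (ContinuousOn.mul (ContinuousOn.add ?_ hcalFm) ?_)
      · exact hFm.div hminner (fun θ hθ => (hmpos θ hθ).ne')
      · exact (continuous_const.mul Real.continuous_sin).continuousOn
    · apply continuousOn_const.mul
      simp only [GDBKuu]
      refine ContinuousOn.add (ContinuousOn.add (ContinuousOn.add (ContinuousOn.sub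
        (ContinuousOn.sub ?_ ?_) ?_) ?_) ?_) ?_
      · exact ContinuousOn.div (continuousOn_const.mul hUc) hD32c hD32ne
      · exact ContinuousOn.div ((continuousOn_const.mul hUc).mul
          ((continuousOn_const.mul (hUc.pow 2)).add
            (continuousOn_const.mul (hVc.pow 2)))) hD52c hD52ne
      · exact hWc.div hD32c hD32ne
      · exact ContinuousOn.div ((continuousOn_const.mul hWc).mul (hUc.pow 2)) hD52c hD52ne
      · exact (hcotc.mul hVc).div ((hUc.pow 2).mul hD12c)
          (fun θ hθ => mul_ne_zero (pow_ne_zero 2 (hUne θ hθ)) (hD12ne θ hθ))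
      · exact (hcotc.mul hVc).div hD32c hD32ne
  · -- positivity of τ₁
    intro θ hθ
    exact div_pos (mul_pos (div_pos hσ hRP) (hγpos θ hθ))
      (Real.rpow_pos_of_pos (hDpos θ hθ) _)
  · -- the Gateaux derivative
    intro h hh θ hθ
    have hθI := GDB_Istrip_subset hθ
    have hh1 : ContDiff ℝ 1 (deriv h) := (contDiff_succ_iff_deriv.mp (h2 ▸ hh)).2.2
    have hhd : Differentiable ℝ h := hh.differentiable (by norm_num)
    have hh'd : Differentiable ℝ (deriv h) := hh1.differentiable (by norm_num)
    have hd1 : ∀ t : ℝ, deriv (fun x => γ x + t * h x)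
        = fun x => deriv γ x + t * deriv h x := by
      intro t; funext x
      exact (((hγd x).hasDerivAt).add (((hhd x).hasDerivAt).const_mul t)).deriv
    have hdval : ∀ t : ℝ, deriv (fun x => γ x + t * h x) θ
        = deriv γ θ + t * deriv h θ := fun t => by rw [hd1 t]
    have hd2val : ∀ t : ℝ, deriv (deriv (fun x => γ x + t * h x)) θ
        = deriv (deriv γ) θ + t * deriv (deriv h) θ := by
      intro t; rw [hd1 t]
      exact (((hγ'd θ).hasDerivAt).add (((hh'd θ).hasDerivAt).const_mul t)).deriv
    -- abbreviations for positivity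
    have hb0 : 0 < R*(1+γ θ) := mul_pos hR (hγpos θ hθ)
    have hm : 0 < R*(1+γ θ)*Real.sin θ := hmpos θ hθ
    -- endpoint derivatives
    have he : HasDerivAt (fun t : ℝ => R*(1+(γ θ + t*h θ))) (R * h θ) 0 := by
      simpa using ((((hasDerivAt_id (0:ℝ)).mul_const (h θ)).const_add (γ θ)).const_add
        1).const_mul R
    have he2 : HasDerivAt (fun t : ℝ => R*(1+(γ θ + t*h θ))*Real.sin θ)
        (R * h θ * Real.sin θ) 0 := he.mul_const _
    -- FTC for the first integral
    have hρslice : ContinuousOn (fun s => ρ s θ) (Set.Ioi 0) :=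
      hρ.continuousOn.comp (continuous_id.prodMk continuous_const).continuousOn
        (fun s hs => ⟨hs, hθI⟩)
    have hsub1 : Set.uIcc a (R*(1+γ θ)) ⊆ Set.Ioi 0 :=
      fun s hs => lt_of_lt_of_le (lt_min ha hb0) hs.1
    have hFTC1 : HasDerivAt (fun u => ∫ s in a..u, ρ s θ) (ρ (R*(1+γ θ)) θ)
        (R*(1+(γ θ + 0*h θ))) := by
      rw [show R*(1+(γ θ + 0*h θ)) = R*(1+γ θ) by ring]
      exact intervalIntegral.integral_hasDerivAt_right
        ((hρslice.mono hsub1).intervalIntegrable)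
        (ContinuousOn.stronglyMeasurableAtFilter isOpen_Ioi hρslice _ hb0)
        (hρslice.continuousAt (isOpen_Ioi.mem_nhds hb0))
    have hI1 : HasDerivAt (fun t : ℝ => ∫ s in a..(R*(1+(γ θ + t*h θ))), ρ s θ)
        (ρ (R*(1+γ θ)) θ * (R * h θ)) 0 := by
      simpa [Function.comp_def] using hFTC1.comp 0 he
    -- FTC for the second integral
    have hG2 : ContinuousOn (fun s => F s / s + calF g ρθ s θ) (Set.Ioi 0) :=
      (hF.continuousOn.div continuousOn_id (fun s hs => ne_of_gt hs)).add
        (hcalFc.comp (continuous_id.prodMk continuous_const).continuousOn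
          (fun s hs => ⟨hs, hθI⟩))
    have hsub2 : Set.uIcc (a*Real.sin θ) (R*(1+γ θ)*Real.sin θ) ⊆ Set.Ioi 0 :=
      fun s hs => lt_of_lt_of_le (lt_min (mul_pos ha (hsin θ hθ)) hm) hs.1
    have hFTC2 : HasDerivAt (fun u => ∫ s in (a*Real.sin θ)..u, (F s / s + calF g ρθ s θ))
        (F (R*(1+γ θ)*Real.sin θ) / (R*(1+γ θ)*Real.sin θ)
          + calF g ρθ (R*(1+γ θ)*Real.sin θ) θ)
        (R*(1+(γ θ + 0*h θ))*Real.sin θ) := by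
      rw [show R*(1+(γ θ + 0*h θ))*Real.sin θ = R*(1+γ θ)*Real.sin θ by ring]
      exact intervalIntegral.integral_hasDerivAt_right
        ((hG2.mono hsub2).intervalIntegrable)
        (ContinuousOn.stronglyMeasurableAtFilter isOpen_Ioi hG2 _ hm)
        (hG2.continuousAt (isOpen_Ioi.mem_nhds hm))
    have hI2 : HasDerivAt (fun t : ℝ =>
        ∫ s in (a*Real.sin θ)..(R*(1+(γ θ + t*h θ))*Real.sin θ),
          (F s / s + calF g ρθ s θ))
        ((F (R*(1+γ θ)*Real.sin θ) / (R*(1+γ θ)*Real.sin θ)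
          + calF g ρθ (R*(1+γ θ)*Real.sin θ) θ) * (R * h θ * Real.sin θ)) 0 := by
      simpa [Function.comp_def] using hFTC2.comp 0 he2
    -- curvature term
    have hK := GDB_hasDerivAt_Kterm (Real.cot θ) (γ θ) (deriv γ θ) (deriv (deriv γ) θ)
      (h θ) (deriv h θ) (deriv (deriv h) θ) (hγpos θ hθ)
    have H := ((((hasDerivAt_const (0:ℝ) (-℘γ θ)).sub (hI1.const_mul (g/Patm))).add
      (hI2.const_mul (1/Patm))).sub (hK.const_mul (σ/(R*Patm)))).add
      (hasDerivAt_const (0:ℝ) (b/Patm + (1/Patm) * ∫ s in (Real.pi/2)..θ,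
        (F (a*Real.sin s)*Real.cot s + calF g ρθ (a*Real.sin s) s * a * Real.cos s)))
    have KEY : HasDerivAt (fun t : ℝ =>
        -℘γ θ - (g / Patm) * (∫ s in a..(R * (1 + (γ θ + t * h θ))), ρ s θ)
        + (1 / Patm) * (∫ s in (a * Real.sin θ)..(R * (1 + (γ θ + t * h θ)) * Real.sin θ),
            (F s / s + calF g ρθ s θ))
        - (σ / (R * Patm)) *
            ((2 * (1 + (γ θ + t * h θ))^2 + 3 * (deriv γ θ + t * deriv h θ)^2) /
                (((1 + (γ θ + t * h θ))^2 + (deriv γ θ + t * deriv h θ)^2) ^ ((3:ℝ)/2))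
              - (deriv (deriv γ) θ + t * deriv (deriv h) θ) * (1 + (γ θ + t * h θ)) /
                (((1 + (γ θ + t * h θ))^2 + (deriv γ θ + t * deriv h θ)^2) ^ ((3:ℝ)/2))
              - Real.cot θ * (deriv γ θ + t * deriv h θ) /
                ((1 + (γ θ + t * h θ)) *
                  (((1 + (γ θ + t * h θ))^2 + (deriv γ θ + t * deriv h θ)^2) ^ ((1:ℝ)/2))))
        + (b / Patm + (1 / Patm) * ∫ s in (Real.pi / 2)..θ,
            (F (a * Real.sin s) * Real.cot s
              + calF g ρθ (a * Real.sin s) s * a * Real.cos s)))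
        (σ / (R * Patm) * (1 + γ θ) /
            (((1 + γ θ)^2 + (deriv γ θ)^2) ^ ((3:ℝ)/2)) * deriv (deriv h) θ
          + (-(σ/(R*Patm)) * GDBKvv (Real.cot θ) (γ θ) (deriv γ θ) (deriv (deriv γ) θ))
              * deriv h θ
          + (-(g/Patm) * (ρ (R*(1+γ θ)) θ * R)
              + (1/Patm) * ((F (R*(1+γ θ)*Real.sin θ) / (R*(1+γ θ)*Real.sin θ)
                  + calF g ρθ (R*(1+γ θ)*Real.sin θ) θ) * (R*Real.sin θ))
              - (σ/(R*Patm)) * GDBKuu (Real.cot θ) (γ θ) (deriv γ θ) (deriv (deriv γ) θ))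
              * h θ) 0 := by
      refine H.congr_deriv ?_
      simp only [GDBKuu, GDBKvv, GDBKww]
      ring
    have hFFt : ∀ t : ℝ, FF g R σ Patm a b ρ ρθ F (fun x => γ x + t * h x) ℘γ θ =
        -℘γ θ - (g / Patm) * (∫ s in a..(R * (1 + (γ θ + t * h θ))), ρ s θ)
        + (1 / Patm) * (∫ s in (a * Real.sin θ)..(R * (1 + (γ θ + t * h θ)) * Real.sin θ),
            (F s / s + calF g ρθ s θ))
        - (σ / (R * Patm)) *
            ((2 * (1 + (γ θ + t * h θ))^2 + 3 * (deriv γ θ + t * deriv h θ)^2) /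
                (((1 + (γ θ + t * h θ))^2 + (deriv γ θ + t * deriv h θ)^2) ^ ((3:ℝ)/2))
              - (deriv (deriv γ) θ + t * deriv (deriv h) θ) * (1 + (γ θ + t * h θ)) /
                (((1 + (γ θ + t * h θ))^2 + (deriv γ θ + t * deriv h θ)^2) ^ ((3:ℝ)/2))
              - Real.cot θ * (deriv γ θ + t * deriv h θ) /
                ((1 + (γ θ + t * h θ)) *
                  (((1 + (γ θ + t * h θ))^2 + (deriv γ θ + t * deriv h θ)^2) ^ ((1:ℝ)/2))))
        + (b / Patm + (1 / Patm) * ∫ s in (Real.pi / 2)..θ,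
            (F (a * Real.sin s) * Real.cot s
              + calF g ρθ (a * Real.sin s) s * a * Real.cos s)) := by
      intro t
      simp only [FF]
      rw [hdval t, hd2val t]
    have hγ0 : (fun x => γ x + (0:ℝ) * h x) = γ := by funext x; ring
    have hFF0 := (congrArg (fun φ : ℝ → ℝ => FF g R σ Patm a b ρ ρθ F φ ℘γ θ)
      hγ0.symm).trans (hFFt 0)
    refine Filter.Tendsto.congr (fun t => ?_) (hasDerivAt_iff_tendsto_slope.mp KEY)
    simp only [slope_fun_def_field, hFFt t, hFF0, sub_zero]
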